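/- Let b, c : ℝ → ℝ be smooth, let m₁, m₂, m₃ ∈ ℝ satisfy m₁ = m₃² − m₂², and define m(y) = m₁·y + m₂·B(y) + m₃·C(y). Then for every smooth function u : ℝ² → ℝ (not necessarily a solution), the identity exp(m₃x + m₂t)·F[u] = ∂ₜ[ exp(m₃x + m₂t)·(∂ₜu − m₂·u + B(u)) ] + ∂ₓ[ exp(m₃x + m₂t)·(m₃·u − ∂ₓu + C(u)) ] holds on ℝ². In particular, exp(m₃x + m₂t) is a conservation law multiplier, and on every solution of F[u] = 0 the displayed current is divergence-free. -/

import Mathlib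

noncomputable section

open Real

/-- Partial derivative in the first (time) variable. -/
def Dt (u : ℝ → ℝ → ℝ) : ℝ → ℝ → ℝ := fun t x => deriv (fun s => u s x) t

/-- Partial derivative in the second (space) variable. -/
def Dx (u : ℝ → ℝ → ℝ) : ℝ → ℝ → ℝ := fun t x => deriv (fun s => u t s) x

/-- Smoothness (C^∞) of a function of two real variables. -/
def Smooth2 (u : ℝ → ℝ → ℝ) : Prop := ContDiff ℝ (⊤ : ℕ∞) (fun p : ℝ × ℝ => u p.1 p.2)

lemma sectT_hasDerivAt {u : ℝ → ℝ → ℝ} (hu : Smooth2 u) (t x : ℝ) :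
    HasDerivAt (fun s => u s x) (Dt u t x) t := by
  have h : DifferentiableAt ℝ (fun s => u s x) t := by
    have := ((hu.differentiable (by simp)).comp
      (differentiable_id.prodMk (differentiable_const x))).differentiableAt (x := t)
    exact this
  exact h.hasDerivAt

lemma sectX_hasDerivAt {u : ℝ → ℝ → ℝ} (hu : Smooth2 u) (t x : ℝ) :
    HasDerivAt (fun s => u t s) (Dx u t x) x := by
  have h : DifferentiableAt ℝ (fun s => u t s) x := by
    have := ((hu.differentiable (by simp)).comp
      ((differentiable_const t).prodMk differentiable_id)).differentiableAt (x := x)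
    exact this
  exact h.hasDerivAt

lemma smooth2_Dt {u : ℝ → ℝ → ℝ} (hu : Smooth2 u) : Smooth2 (Dt u) := by
  have key : (fun p : ℝ × ℝ => Dt u p.1 p.2)
      = fun p : ℝ × ℝ => fderiv ℝ (fun q : ℝ × ℝ => u q.1 q.2) p ((1:ℝ), (0:ℝ)) := by
    funext p
    obtain ⟨t, x⟩ := p
    have h1 : HasDerivAt (fun s : ℝ => ((s, x) : ℝ × ℝ)) ((1:ℝ), (0:ℝ)) t :=
      (hasDerivAt_id t).prodMk (hasDerivAt_const t x)
    have h2 : HasDerivAt (fun s => u s x)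
        (fderiv ℝ (fun q : ℝ × ℝ => u q.1 q.2) (t, x) ((1:ℝ), (0:ℝ))) t :=
      by have := ((hu.differentiable (by simp) (t, x)).hasFDerivAt).comp_hasDerivAt t h1; exact this
    exact h2.deriv
  rw [Smooth2, key]
  exact (hu.fderiv_right (by simp)).clm_apply contDiff_const

lemma smooth2_Dx {u : ℝ → ℝ → ℝ} (hu : Smooth2 u) : Smooth2 (Dx u) := by
  have key : (fun p : ℝ × ℝ => Dx u p.1 p.2)
      = fun p : ℝ × ℝ => fderiv ℝ (fun q : ℝ × ℝ => u q.1 q.2) p ((0:ℝ), (1:ℝ)) := by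
    funext p
    obtain ⟨t, x⟩ := p
    have h1 : HasDerivAt (fun s : ℝ => ((t, s) : ℝ × ℝ)) ((0:ℝ), (1:ℝ)) x :=
      (hasDerivAt_const x t).prodMk (hasDerivAt_id x)
    have h2 : HasDerivAt (fun s => u t s)
        (fderiv ℝ (fun q : ℝ × ℝ => u q.1 q.2) (t, x) ((0:ℝ), (1:ℝ))) x :=
      ((hu.differentiable (by simp) (t, x)).hasFDerivAt).comp_hasDerivAt x h1
    exact h2.deriv
  rw [Smooth2, key]
  exact (hu.fderiv_right (by simp)).clm_apply contDiff_const

/-- The semilinear wave operator F[u] = ∂ₜ²u − ∂ₓ²u + b(u)∂ₜu + c(u)∂ₓu + m(u). -/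
def Fop (b c m : ℝ → ℝ) (u : ℝ → ℝ → ℝ) : ℝ → ℝ → ℝ := fun t x =>
  Dt (Dt u) t x - Dx (Dx u) t x + b (u t x) * Dt u t x + c (u t x) * Dx u t x + m (u t x)

/-- The adjoint linearized operator along u:
L*[u]q = ∂ₜ²q − ∂ₓ²q − b(u)∂ₜq − c(u)∂ₓq + m′(u)q. -/
def Lstar (b c m : ℝ → ℝ) (u q : ℝ → ℝ → ℝ) : ℝ → ℝ → ℝ := fun t x =>
  Dt (Dt q) t x - Dx (Dx q) t x - b (u t x) * Dt q t x - c (u t x) * Dx q t x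
    + deriv m (u t x) * q t x

/-- exp(m₃x + m₂t) is a conservation law multiplier of the semilinear wave
equation with m = m₁u + m₂∫b + m₃∫c, m₁ = m₃² − m₂². -/
theorem stmt_6
    (b c : ℝ → ℝ) (hb : ContDiff ℝ (⊤ : ℕ∞) b) (hc : ContDiff ℝ (⊤ : ℕ∞) c)
    (m₁ m₂ m₃ : ℝ) (hm₁ : m₁ = m₃ ^ 2 - m₂ ^ 2)
    (m B C : ℝ → ℝ)
    (hB : ∀ y, B y = ∫ s in (0:ℝ)..y, b s)
    (hC : ∀ y, C y = ∫ s in (0:ℝ)..y, c s)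
    (hmdef : ∀ y, m y = m₁ * y + m₂ * B y + m₃ * C y)
    (u : ℝ → ℝ → ℝ) (hu : Smooth2 u) :
    (∀ t x : ℝ,
      Real.exp (m₃ * x + m₂ * t) * Fop b c m u t x =
        Dt (fun t x => Real.exp (m₃ * x + m₂ * t) * (Dt u t x - m₂ * u t x + B (u t x))) t x
        + Dx (fun t x => Real.exp (m₃ * x + m₂ * t) * (m₃ * u t x - Dx u t x + C (u t x))) t x)
    ∧ ((∀ t x, Fop b c m u t x = 0) →
      ∀ t x : ℝ,
        Dt (fun t x => Real.exp (m₃ * x + m₂ * t) * (Dt u t x - m₂ * u t x + B (u t x))) t x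
        + Dx (fun t x => Real.exp (m₃ * x + m₂ * t) * (m₃ * u t x - Dx u t x + C (u t x))) t x
          = 0) := by
  have hBd : ∀ y, HasDerivAt B (b y) y := by
    intro y
    have h : HasDerivAt (fun z => ∫ s in (0:ℝ)..z, b s) (b y) y :=
      (hb.continuous.integral_hasStrictDerivAt 0 y).hasDerivAt
    have : B = fun z => ∫ s in (0:ℝ)..z, b s := funext hB
    rw [this]; exact h
  have hCd : ∀ y, HasDerivAt C (c y) y := by
    intro y
    have h : HasDerivAt (fun z => ∫ s in (0:ℝ)..z, c s) (c y) y :=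
      (hc.continuous.integral_hasStrictDerivAt 0 y).hasDerivAt
    have : C = fun z => ∫ s in (0:ℝ)..z, c s := funext hC
    rw [this]; exact h
  have main : ∀ t x : ℝ,
      Real.exp (m₃ * x + m₂ * t) * Fop b c m u t x =
        Dt (fun t x => Real.exp (m₃ * x + m₂ * t) * (Dt u t x - m₂ * u t x + B (u t x))) t x
        + Dx (fun t x => Real.exp (m₃ * x + m₂ * t) * (m₃ * u t x - Dx u t x + C (u t x))) t x := by
    intro t x
    set E := Real.exp (m₃ * x + m₂ * t) with hE
    -- t-derivative
    have he : HasDerivAt (fun s : ℝ => Real.exp (m₃ * x + m₂ * s)) (E * m₂) t := by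
      have : HasDerivAt (fun s : ℝ => m₃ * x + m₂ * s) m₂ t := by
        simpa using ((hasDerivAt_id t).const_mul m₂).const_add (m₃ * x)
      simpa [hE] using this.exp
    have hut : HasDerivAt (fun s => u s x) (Dt u t x) t := sectT_hasDerivAt hu t x
    have hutt : HasDerivAt (fun s => Dt u s x) (Dt (Dt u) t x) t :=
      sectT_hasDerivAt (smooth2_Dt hu) t x
    have hBt : HasDerivAt (fun s => B (u s x)) (b (u t x) * Dt u t x) t :=
      (hBd (u t x)).comp t hut
    have hT : HasDerivAt
        (fun s => Real.exp (m₃ * x + m₂ * s) * (Dt u s x - m₂ * u s x + B (u s x)))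
        (E * m₂ * (Dt u t x - m₂ * u t x + B (u t x))
          + E * (Dt (Dt u) t x - m₂ * Dt u t x + b (u t x) * Dt u t x)) t := by
      exact he.mul ((hutt.sub (hut.const_mul m₂)).add hBt)
    -- x-derivative
    have heX : HasDerivAt (fun y : ℝ => Real.exp (m₃ * y + m₂ * t)) (E * m₃) x := by
      have : HasDerivAt (fun y : ℝ => m₃ * y + m₂ * t) m₃ x := by
        simpa using ((hasDerivAt_id x).const_mul m₃).add_const (m₂ * t)
      simpa [hE] using this.exp
    have hux : HasDerivAt (fun s => u t s) (Dx u t x) x := sectX_hasDerivAt hu t x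
    have huxx : HasDerivAt (fun s => Dx u t s) (Dx (Dx u) t x) x :=
      sectX_hasDerivAt (smooth2_Dx hu) t x
    have hCx : HasDerivAt (fun s => C (u t s)) (c (u t x) * Dx u t x) x :=
      (hCd (u t x)).comp x hux
    have hX : HasDerivAt
        (fun s => Real.exp (m₃ * s + m₂ * t) * (m₃ * u t s - Dx u t s + C (u t s)))
        (E * m₃ * (m₃ * u t x - Dx u t x + C (u t x))
          + E * (m₃ * Dx u t x - Dx (Dx u) t x + c (u t x) * Dx u t x)) x := by
      exact heX.mul (((hux.const_mul m₃).sub huxx).add hCx)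
    have eT := hT.deriv
    have eX := hX.deriv
    show E * Fop b c m u t x = _
    rw [Dt, Dx, eT, eX, Fop, hmdef, hm₁]
    ring
  exact ⟨main, fun hsol t x => by rw [← main t x, hsol t x, mul_zero]⟩
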